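/- Let U = {y ∈ 𝔽_{q²}^× : y^{q+1} = 1} be the norm-one subgroup and λ : U → ℂ^× a group homomorphism. For every pair (X,Y) ∈ 𝔽_{q²} × 𝔽_{q²}^× with Y + Y^q = −X^{q+1}, the element 1 + X^{q+1}·Y⁻¹ equals −Y^{q−1} and lies in U, and Σ_{(X,Y) : Y + Y^q = −X^{q+1}, Y ≠ 0} λ(Y^{1−q})·λ(1 + X^{q+1}·Y⁻¹) = λ(−1)·(q³ − 1). (This is the computation of b_y·T_y(s_y) in the depth-zero U(1) example in the case λ̃ ↔ λ, i.e. λ̃(Y) = λ(Y^{1−q}).) -/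

import Mathlib

/-- The norm-one subgroup `U = {y ∈ 𝔽_{q²}^× : y^{q+1} = 1}` of `K^×`. -/
def normOneSubgroup (K : Type*) [Field K] (q : ℕ) : Subgroup Kˣ where
  carrier := {u : Kˣ | (u : K) ^ (q + 1) = 1}
  one_mem' := by simp
  mul_mem' := by
    intro a b ha hb
    simp only [Set.mem_setOf_eq, Units.val_mul, mul_pow] at *
    rw [ha, hb, mul_one]
  inv_mem' := by
    intro a ha
    simp only [Set.mem_setOf_eq] at ha ⊢
    rw [Units.val_inv_eq_inv_val, inv_pow, ha, inv_one]

open Finset Polynomial in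
/-- Auxiliary: in a finite field, the number of roots of `y^q + c*y` is at most `q` (q ≥ 2). -/
lemma aux_root_bound (K : Type) [Field K] [Fintype K] [DecidableEq K] (q : ℕ) (hq2 : 2 ≤ q)
    (c : K) : (Finset.univ.filter (fun y : K => y ^ q + c * y = 0)).card ≤ q := by
  set P : K[X] := X ^ q + C c * X with hP
  have hPne : P ≠ 0 := by
    intro h
    have hc : P.coeff q = 1 := by
      have hq1 : ¬ (1 = q) := by omega
      simp [hP, Polynomial.coeff_X_pow, Polynomial.coeff_X, hq1]
    rw [h] at hc
    simp at hc
  have hdeg : P.natDegree ≤ q := by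
    refine le_trans (Polynomial.natDegree_add_le _ _) (max_le ?_ ?_)
    · simp
    · refine le_trans (Polynomial.natDegree_mul_le) ?_
      simp
      omega
  have hsub : Finset.univ.filter (fun y : K => y ^ q + c * y = 0) ⊆ P.roots.toFinset := by
    intro y hy
    simp only [Finset.mem_filter, Finset.mem_univ, true_and] at hy
    rw [Multiset.mem_toFinset, Polynomial.mem_roots hPne]
    simp [hP, Polynomial.IsRoot, hy]
  calc (Finset.univ.filter (fun y : K => y ^ q + c * y = 0)).card
      ≤ P.roots.toFinset.card := Finset.card_le_card hsub
    _ ≤ Multiset.card P.roots := Multiset.toFinset_card_le _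
    _ ≤ P.natDegree := Polynomial.card_roots' P
    _ ≤ q := hdeg

/-- Let `U` be the norm-one subgroup of `𝔽_{q²}^×` and `λ : U → ℂ^×` a
group homomorphism. For every pair `(X,Y)` with `Y ≠ 0` and `Y + Y^q = −X^{q+1}`, the
element `1 + X^{q+1}·Y⁻¹` equals `−Y^{q−1}` and lies in `U`, and
`Σ_{(X,Y)} λ(Y^{1−q})·λ(1 + X^{q+1}·Y⁻¹) = λ(−1)·(q³ − 1)`. -/
theorem gauss_sum_U1_depth_zero
    (q : ℕ) (hq : Odd q)
    (K : Type) [Field K] [Fintype K] [DecidableEq K]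
    (hcard : Fintype.card K = q ^ 2)
    (lam : (normOneSubgroup K q) →* ℂˣ)
    (f : K → ℂ)
    (hf : ∀ u : normOneSubgroup K q, f ((u : Kˣ) : K) = ((lam u : ℂˣ) : ℂ)) :
    (∀ X Y : K, Y ≠ 0 → Y + Y ^ q = -(X ^ (q + 1)) →
      1 + X ^ (q + 1) * Y⁻¹ = -(Y ^ (q - 1)) ∧
        (1 + X ^ (q + 1) * Y⁻¹) ^ (q + 1) = 1) ∧
    ∑ p ∈ (Finset.univ : Finset (K × K)).filter
        (fun p => p.2 ≠ 0 ∧ p.2 + p.2 ^ q = -(p.1 ^ (q + 1))),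
        f ((p.2 ^ (q - 1))⁻¹) * f (1 + p.1 ^ (q + 1) * p.2⁻¹)
      = f (-1) * ((q : ℂ) ^ 3 - 1) := by
  classical
  -- basic numerics
  have hq2 : 2 ≤ q := by
    have h2 : 1 < Fintype.card K := Fintype.one_lt_card
    rw [hcard] at h2
    by_contra h
    push_neg at h
    interval_cases q <;> norm_num at h2
  have hq1 : 1 ≤ q := by omega
  have hqsub : q - 1 + 1 = q := by omega
  have hqq : (q - 1) * (q + 1) = q ^ 2 - 1 := by
    obtain ⟨r, rfl⟩ : ∃ r, q = r + 1 := ⟨q - 1, hqsub.symm⟩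
    have h : (r + 1) ^ 2 = (r + 1 - 1) * (r + 1 + 1) + 1 := by
      simp only [Nat.add_sub_cancel]
      ring
    exact (Nat.sub_eq_of_eq_add h).symm
  -- field facts
  have hpow : ∀ x : K, x ^ (q ^ 2) = x := by
    intro x; conv_rhs => rw [← FiniteField.pow_card x]
    rw [hcard]
  have hpow1 : ∀ x : K, x ≠ 0 → x ^ (q ^ 2 - 1) = 1 := by
    intro x hx
    have := FiniteField.pow_card_sub_one_eq_one x hx
    rwa [hcard] at this
  have hneg1 : (-1 : K) ^ (q + 1) = 1 := Even.neg_one_pow (by simpa using hq.add_one)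
  have hnegq : ∀ x : K, (-x) ^ q = -(x ^ q) := fun x => hq.neg_pow x
  -- frobenius additivity
  have hfrob : ∀ x y : K, (x + y) ^ q = x ^ q + y ^ q := by
    obtain ⟨p, hp⟩ := CharP.exists K
    haveI := hp
    haveI : Fact p.Prime := ⟨CharP.char_is_prime K p⟩
    obtain ⟨n, -, hcn⟩ := FiniteField.card K p
    have hdvd : q ∣ p ^ (n : ℕ) := by
      rw [← hcn, hcard]
      exact dvd_pow_self q two_ne_zero
    obtain ⟨m, -, rfl⟩ := (Nat.dvd_prime_pow (Fact.out : p.Prime)).mp hdvd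
    intro x y
    exact add_pow_char_pow x y p m
  have hTsub : ∀ a b : K, (a - b) + (a - b) ^ q = (a + a ^ q) - (b + b ^ q) := by
    intro a b
    rw [sub_eq_add_neg a b, hfrob, hnegq]
    ring
  -- Part 1 identities
  have key1 : ∀ X Y : K, Y ≠ 0 → Y + Y ^ q = -(X ^ (q + 1)) →
      1 + X ^ (q + 1) * Y⁻¹ = -(Y ^ (q - 1)) := by
    intro X Y hY h
    have h2 : X ^ (q + 1) = -(Y + Y ^ q) := by linear_combination h
    have hYq : (Y : K) ^ q = Y ^ (q - 1) * Y := by rw [← pow_succ, hqsub]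
    have e1 : (Y + X ^ (q + 1)) * Y⁻¹ = 1 + X ^ (q + 1) * Y⁻¹ := by
      rw [add_mul, mul_inv_cancel₀ hY]
    rw [← e1, h2]
    have e2 : Y + -(Y + Y ^ q) = -(Y ^ (q - 1) * Y) := by rw [hYq]; ring
    rw [e2, neg_mul, mul_assoc, mul_inv_cancel₀ hY, mul_one]
  have normone : ∀ Y : K, Y ≠ 0 → (Y ^ (q - 1)) ^ (q + 1) = 1 := by
    intro Y hY
    rw [← pow_mul, hqq]
    exact hpow1 Y hY
  have key2 : ∀ X Y : K, Y ≠ 0 → Y + Y ^ q = -(X ^ (q + 1)) →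
      (1 + X ^ (q + 1) * Y⁻¹) ^ (q + 1) = 1 := by
    intro X Y hY h
    rw [key1 X Y hY h, show -(Y ^ (q-1)) = (-1) * Y ^ (q-1) by ring, mul_pow, hneg1,
      one_mul, normone Y hY]
  refine ⟨fun X Y hY h => ⟨key1 X Y hY h, key2 X Y hY h⟩, ?_⟩
  -- the element -1 of U
  have hm1mem : ((-1 : Kˣ) : K) ^ (q + 1) = 1 := by
    simpa using hneg1
  set nu : normOneSubgroup K q := ⟨-1, hm1mem⟩ with hnu
  have hfm1 : f (-1) = ((lam nu : ℂˣ) : ℂ) := by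
    have := hf nu
    simpa [hnu] using this
  -- each term of the sum equals f (-1)
  have hterm : ∀ X Y : K, Y ≠ 0 → Y + Y ^ q = -(X ^ (q + 1)) →
      f ((Y ^ (q - 1))⁻¹) * f (1 + X ^ (q + 1) * Y⁻¹) = f (-1) := by
    intro X Y hY h
    set u : Kˣ := Units.mk0 (Y ^ (q - 1)) (pow_ne_zero _ hY) with hu
    have hamem : ((u : Kˣ) : K) ^ (q + 1) = 1 := by
      simpa [hu] using normone Y hY
    set a : normOneSubgroup K q := ⟨u, hamem⟩ with ha
    have hbmem : (((-u : Kˣ)) : K) ^ (q + 1) = 1 := by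
      rw [Units.val_neg, show -(u : K) = (-1) * (u : K) by ring, mul_pow, hneg1, one_mul]
      exact hamem
    set b : normOneSubgroup K q := ⟨-u, hbmem⟩ with hb
    have h1 : f ((Y ^ (q - 1))⁻¹) = ((lam a⁻¹ : ℂˣ) : ℂ) := by
      have := hf a⁻¹
      simpa [ha, hu] using this
    have h2 : f (1 + X ^ (q + 1) * Y⁻¹) = ((lam b : ℂˣ) : ℂ) := by
      rw [key1 X Y hY h]
      have := hf b
      simpa [hb, hu] using this
    have hab : a⁻¹ * b = nu := by
      apply Subtype.ext
      simp only [ha, hb, hnu, MulMemClass.coe_mul, InvMemClass.coe_inv]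
      apply Units.ext
      simp only [Units.val_mul, Units.val_neg, Units.val_inv_eq_inv_val, Units.val_one, hu,
        Units.val_mk0]
      rw [mul_neg, inv_mul_cancel₀ (pow_ne_zero _ hY)]
    rw [h1, h2, hfm1, ← Units.val_mul, ← map_mul, hab]
  -- counting: kernel and image of the "trace" map
  set T : K → K := fun y => y + y ^ q with hT
  set Tker := Finset.univ.filter (fun y : K => T y = 0) with hTker
  set Timg := Finset.univ.image T with hTimg
  set Rset := Finset.univ.filter (fun t : K => t ^ q = t) with hRset
  have h_fiber : ∀ t ∈ Timg, (Finset.univ.filter (fun y : K => T y = t)).card = Tker.card := by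
    intro t ht
    obtain ⟨y₀, -, rfl⟩ := Finset.mem_image.mp ht
    apply Finset.card_nbij' (fun y => y - y₀) (fun z => z + y₀)
    · intro y hy
      simp only [Finset.mem_coe, Finset.mem_filter, Finset.mem_univ, true_and, hT, hTker] at *
      rw [hTsub y y₀, hy, sub_self]
    · intro z hz
      simp only [Finset.mem_coe, Finset.mem_filter, Finset.mem_univ, true_and, hT, hTker] at *
      have := hTsub (z + y₀) y₀
      simp only [add_sub_cancel_right] at this
      linear_combination hz - this
    · intro y _; ring
    · intro z _; ring
  have h_card_prod : Tker.card * Timg.card = q ^ 2 := by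
    have h1 : (Finset.univ : Finset K).card = ∑ t ∈ Timg, (Finset.univ.filter (fun y : K => T y = t)).card :=
      Finset.card_eq_sum_card_image T Finset.univ
    rw [Finset.sum_congr rfl h_fiber, Finset.sum_const, smul_eq_mul] at h1
    rw [mul_comm, ← h1, Finset.card_univ, hcard]
  have h_ker_le : Tker.card ≤ q := by
    refine le_trans (Finset.card_le_card ?_) (aux_root_bound K q hq2 1)
    intro y hy
    simp only [Finset.mem_filter, Finset.mem_univ, true_and, hTker, hT] at *
    linear_combination hy
  have h_Rset_le : Rset.card ≤ q := by
    refine le_trans (Finset.card_le_card ?_) (aux_root_bound K q hq2 (-1))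
    intro y hy
    simp only [Finset.mem_filter, Finset.mem_univ, true_and, hRset] at *
    linear_combination hy
  have h_img_sub : Timg ⊆ Rset := by
    intro t ht
    obtain ⟨y, -, rfl⟩ := Finset.mem_image.mp ht
    simp only [Finset.mem_filter, Finset.mem_univ, true_and, hRset, hT]
    rw [hfrob, ← pow_mul]
    have hyy : y ^ (q * q) = y := by
      rw [show q * q = q ^ 2 by ring]
      exact hpow y
    rw [hyy]
    ring
  have h_img_le : Timg.card ≤ q := le_trans (Finset.card_le_card h_img_sub) h_Rset_le
  have h_ker_eq : Tker.card = q := by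
    refine le_antisymm h_ker_le ?_
    have : q * q ≤ Tker.card * q := by
      calc q * q = q ^ 2 := (sq q).symm
        _ = Tker.card * Timg.card := h_card_prod.symm
        _ ≤ Tker.card * q := Nat.mul_le_mul_left _ h_img_le
    exact Nat.le_of_mul_le_mul_right this (by omega)
  have h_img_eq : Timg.card = q := by
    have := h_card_prod
    rw [h_ker_eq, pow_two] at this
    exact Nat.eq_of_mul_eq_mul_left (by omega) this
  have h_img_full : Timg = Rset := by
    apply Finset.eq_of_subset_of_card_le h_img_sub
    rw [h_img_eq]; exact h_Rset_le
  have h_mem_range : ∀ X : K, -(X ^ (q + 1)) ∈ Timg := by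
    intro X
    rw [h_img_full]
    simp only [Finset.mem_filter, Finset.mem_univ, true_and, hRset]
    rw [hnegq, ← pow_mul]
    have hXX : X ^ ((q + 1) * q) = X ^ (q ^ 2) * X ^ q := by
      rw [← pow_add]; congr 1; ring
    rw [hXX, hpow]
    ring
  -- card of the full solution set
  have hS' : ((Finset.univ : Finset (K × K)).filter
      (fun p => p.2 + p.2 ^ q = -(p.1 ^ (q + 1)))).card = q ^ 3 := by
    rw [Finset.card_filter, ← Finset.univ_product_univ, Finset.sum_product]
    have hinner : ∀ X : K, (∑ Y : K, if Y + Y ^ q = -(X ^ (q + 1)) then 1 else 0) = q := by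
      intro X
      rw [← Finset.card_filter]
      have := h_fiber _ (h_mem_range X)
      rw [h_ker_eq] at this
      exact this
    rw [Finset.sum_congr rfl (fun X _ => hinner X), Finset.sum_const, smul_eq_mul,
      Finset.card_univ, hcard]
    ring
  -- relate to the punctured set
  have hmem00 : ((0 : K), (0 : K)) ∈ (Finset.univ : Finset (K × K)).filter
      (fun p => p.2 + p.2 ^ q = -(p.1 ^ (q + 1))) := by
    simp [zero_pow (show q ≠ 0 by omega)]
  have hSet : (Finset.univ : Finset (K × K)).filter
      (fun p => p.2 ≠ 0 ∧ p.2 + p.2 ^ q = -(p.1 ^ (q + 1)))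
      = ((Finset.univ : Finset (K × K)).filter
        (fun p => p.2 + p.2 ^ q = -(p.1 ^ (q + 1)))).erase ((0 : K), (0 : K)) := by
    ext p
    simp only [Finset.mem_filter, Finset.mem_univ, true_and, Finset.mem_erase]
    constructor
    · rintro ⟨h1, h2⟩
      refine ⟨?_, h2⟩
      intro hp
      rw [hp] at h1
      exact h1 rfl
    · rintro ⟨h1, h2⟩
      refine ⟨?_, h2⟩
      intro hp2
      apply h1
      rw [hp2] at h2
      have hq0 : q ≠ 0 := by omega
      rw [zero_pow hq0, add_zero] at h2
      have : p.1 ^ (q + 1) = 0 := by linear_combination h2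
      have hp1 : p.1 = 0 := by
        exact pow_eq_zero_iff (by omega) |>.mp this
      exact Prod.ext hp1 hp2
  have hScard : ((Finset.univ : Finset (K × K)).filter
      (fun p => p.2 ≠ 0 ∧ p.2 + p.2 ^ q = -(p.1 ^ (q + 1)))).card = q ^ 3 - 1 := by
    rw [hSet, Finset.card_erase_of_mem hmem00, hS']
  -- conclude
  rw [Finset.sum_congr rfl (fun p hp => by
    simp only [Finset.mem_filter, Finset.mem_univ, true_and] at hp
    exact hterm p.1 p.2 hp.1 hp.2), Finset.sum_const, hScard, nsmul_eq_mul]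
  rw [Nat.cast_sub (Nat.one_le_pow _ _ (by omega)), Nat.cast_pow, Nat.cast_one]
  ring
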